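/- Let f : ℝ^{n×p} → ℝ be continuously differentiable, let X ∈ ℝ^{n×p} satisfy σ_min(X) > 0, let δ > 0, and suppose β > (‖∇f(X)‖₂·‖X‖₂ + δ)/σ_min(X)². Then, with Λ = Ψ(∇f(X)ᵀX), it holds that ‖XᵀX − I_p‖_F ≤ (‖X‖₂/δ)·‖∇_X L_β(X, Λ)‖_F. -/

import Mathlib

open Matrix

attribute [local instance] Matrix.frobeniusNormedAddCommGroup Matrix.frobeniusNormedSpace

/-- Spectral norm (largest singular value) of a real matrix. -/
noncomputable def specNorm {n p : ℕ} (A : Matrix (Fin n) (Fin p) ℝ) : ℝ :=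
  ⨆ v : Metric.sphere (0 : EuclideanSpace ℝ (Fin p)) 1, ‖Matrix.toEuclideanLin A v.1‖

/-- Smallest singular value of a real matrix. -/
noncomputable def sigmaMin {n p : ℕ} (A : Matrix (Fin n) (Fin p) ℝ) : ℝ :=
  ⨅ v : Metric.sphere (0 : EuclideanSpace ℝ (Fin p)) 1, ‖Matrix.toEuclideanLin A v.1‖

namespace Stmt4Aux

variable {a b c : ℕ}

lemma fro_sq (M : Matrix (Fin a) (Fin b) ℝ) : ‖M‖ ^ 2 = ∑ i, ∑ j, (M i j) ^ 2 := by
  have h0 : (0:ℝ) ≤ ∑ i, ∑ j, (M i j) ^ 2 := by positivity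
  rw [Matrix.frobenius_norm_def, ← Real.sqrt_eq_rpow]
  have h1 : ∀ i j, ‖M i j‖ ^ (2:ℝ) = (M i j) ^ 2 := fun i j => by
    rw [Real.rpow_two, Real.norm_eq_abs, sq_abs]
  simp_rw [h1]
  exact Real.sq_sqrt h0

/-- Frobenius inner product. -/
noncomputable def ip (A B : Matrix (Fin a) (Fin b) ℝ) : ℝ := Matrix.trace (Aᵀ * B)

lemma ip_eq_sum (A B : Matrix (Fin a) (Fin b) ℝ) :
    ip A B = ∑ i, ∑ j, A i j * B i j := by
  rw [ip, Matrix.trace]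
  simp only [Matrix.diag, Matrix.mul_apply, Matrix.transpose_apply]
  exact Finset.sum_comm

lemma ip_self (A : Matrix (Fin a) (Fin b) ℝ) : ip A A = ‖A‖ ^ 2 := by
  rw [ip_eq_sum, fro_sq]
  simp [sq]

lemma ip_le (A B : Matrix (Fin a) (Fin b) ℝ) : ip A B ≤ ‖A‖ * ‖B‖ := by
  have h := Finset.sum_mul_sq_le_sq_mul_sq Finset.univ
    (fun q : Fin a × Fin b => A q.1 q.2) (fun q : Fin a × Fin b => B q.1 q.2)
  have hA : ∑ q : Fin a × Fin b, (A q.1 q.2) ^ 2 = ‖A‖ ^ 2 := by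
    rw [fro_sq]; exact Fintype.sum_prod_type (f := fun q : Fin a × Fin b => (A q.1 q.2) ^ 2)
  have hB : ∑ q : Fin a × Fin b, (B q.1 q.2) ^ 2 = ‖B‖ ^ 2 := by
    rw [fro_sq]; exact Fintype.sum_prod_type (f := fun q : Fin a × Fin b => (B q.1 q.2) ^ 2)
  have hip : ip A B = ∑ q : Fin a × Fin b, A q.1 q.2 * B q.1 q.2 := by
    rw [ip_eq_sum]
    exact (Fintype.sum_prod_type (f := fun q : Fin a × Fin b => A q.1 q.2 * B q.1 q.2)).symm
  have h2 : (ip A B) ^ 2 ≤ (‖A‖ * ‖B‖) ^ 2 := by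
    rw [hip, mul_pow]; rw [hA, hB] at h; exact h
  exact (abs_le_of_sq_le_sq' h2 (by positivity)).2

lemma euclid_upper (A : Matrix (Fin a) (Fin b) ℝ) (w : EuclideanSpace ℝ (Fin b)) :
    ‖Matrix.toEuclideanLin A w‖ ≤ specNorm A * ‖w‖ := by
  rcases eq_or_ne w 0 with h | h
  · simp [h]
  · have hw : (0:ℝ) < ‖w‖ := norm_pos_iff.2 h
    set u : EuclideanSpace ℝ (Fin b) := ‖w‖⁻¹ • w with hu
    have hun : ‖u‖ = 1 := by
      rw [hu, norm_smul, norm_inv, norm_norm, inv_mul_cancel₀ (ne_of_gt hw)]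
    have humem : u ∈ Metric.sphere (0 : EuclideanSpace ℝ (Fin b)) 1 := by
      simpa [mem_sphere_zero_iff_norm] using hun
    have hcont : Continuous fun v : Metric.sphere (0 : EuclideanSpace ℝ (Fin b)) 1 =>
        ‖Matrix.toEuclideanLin A v.1‖ :=
      ((Matrix.toEuclideanLin A).continuous_of_finiteDimensional.comp
        continuous_subtype_val).norm
    have hbdd : BddAbove (Set.range fun v : Metric.sphere (0 : EuclideanSpace ℝ (Fin b)) 1 =>
        ‖Matrix.toEuclideanLin A v.1‖) := by
      haveI : Nonempty (Metric.sphere (0 : EuclideanSpace ℝ (Fin b)) 1) := ⟨⟨u, humem⟩⟩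
      exact (isCompact_range hcont).bddAbove
    have h1 : ‖Matrix.toEuclideanLin A u‖ ≤ specNorm A :=
      le_ciSup hbdd (⟨u, humem⟩ : Metric.sphere (0 : EuclideanSpace ℝ (Fin b)) 1)
    have hwu : w = ‖w‖ • u := by
      rw [hu, smul_smul, mul_inv_cancel₀ (ne_of_gt hw), one_smul]
    calc ‖Matrix.toEuclideanLin A w‖ = ‖w‖ * ‖Matrix.toEuclideanLin A u‖ := by
          conv_lhs => rw [hwu]
          rw [_root_.map_smul, norm_smul, norm_norm]
      _ ≤ ‖w‖ * specNorm A := by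
          exact mul_le_mul_of_nonneg_left h1 (le_of_lt hw)
      _ = specNorm A * ‖w‖ := mul_comm _ _

lemma euclid_lower (A : Matrix (Fin a) (Fin b) ℝ) (w : EuclideanSpace ℝ (Fin b)) :
    sigmaMin A * ‖w‖ ≤ ‖Matrix.toEuclideanLin A w‖ := by
  rcases eq_or_ne w 0 with h | h
  · simp [h]
  · have hw : (0:ℝ) < ‖w‖ := norm_pos_iff.2 h
    set u : EuclideanSpace ℝ (Fin b) := ‖w‖⁻¹ • w with hu
    have hun : ‖u‖ = 1 := by
      rw [hu, norm_smul, norm_inv, norm_norm, inv_mul_cancel₀ (ne_of_gt hw)]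
    have humem : u ∈ Metric.sphere (0 : EuclideanSpace ℝ (Fin b)) 1 := by
      simpa [mem_sphere_zero_iff_norm] using hun
    have hbdd : BddBelow (Set.range fun v : Metric.sphere (0 : EuclideanSpace ℝ (Fin b)) 1 =>
        ‖Matrix.toEuclideanLin A v.1‖) :=
      ⟨0, fun x hx => by obtain ⟨v, rfl⟩ := hx; exact norm_nonneg _⟩
    have h1 : sigmaMin A ≤ ‖Matrix.toEuclideanLin A u‖ :=
      ciInf_le hbdd (⟨u, humem⟩ : Metric.sphere (0 : EuclideanSpace ℝ (Fin b)) 1)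
    have hwu : w = ‖w‖ • u := by
      rw [hu, smul_smul, mul_inv_cancel₀ (ne_of_gt hw), one_smul]
    have hTw : ‖Matrix.toEuclideanLin A w‖ = ‖w‖ * ‖Matrix.toEuclideanLin A u‖ := by
      conv_lhs => rw [hwu]
      rw [_root_.map_smul, norm_smul, norm_norm]
    rw [hTw]
    calc sigmaMin A * ‖w‖ = ‖w‖ * sigmaMin A := mul_comm _ _
      _ ≤ ‖w‖ * ‖Matrix.toEuclideanLin A u‖ :=
          mul_le_mul_of_nonneg_left h1 (norm_nonneg _)

lemma col_norm (A : Matrix (Fin a) (Fin b) ℝ) (v : Fin b → ℝ) :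
    ∑ i, (A.mulVec v i) ^ 2 =
      ‖Matrix.toEuclideanLin A ((WithLp.equiv 2 (Fin b → ℝ)).symm v)‖ ^ 2 := by
  rw [WithLp.equiv_symm_apply, Matrix.toEuclideanLin_apply_piLp_toLp, EuclideanSpace.norm_eq]
  rw [Real.sq_sqrt (by positivity)]
  congr 1
  ext i
  rw [PiLp.toLp_apply, Real.norm_eq_abs, sq_abs]

lemma vec_norm (v : Fin b → ℝ) :
    ∑ j, (v j) ^ 2 = ‖(WithLp.equiv 2 (Fin b → ℝ)).symm v‖ ^ 2 := by
  rw [EuclideanSpace.norm_eq, Real.sq_sqrt (by positivity)]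
  congr 1
  ext j
  rw [WithLp.equiv_symm_apply, PiLp.toLp_apply, Real.norm_eq_abs, sq_abs]

lemma mul_entry (A : Matrix (Fin a) (Fin b) ℝ) (M : Matrix (Fin b) (Fin c) ℝ) (i j) :
    (A * M) i j = A.mulVec (fun k => M k j) i := by
  simp [Matrix.mul_apply, Matrix.mulVec, dotProduct]

lemma mul_norm_le (A : Matrix (Fin a) (Fin b) ℝ) (M : Matrix (Fin b) (Fin c) ℝ)
    (hA : 0 ≤ specNorm A) : ‖A * M‖ ≤ specNorm A * ‖M‖ := by
  have hAM : ‖A * M‖ ^ 2 = ∑ j, ∑ i, ((A * M) i j) ^ 2 := by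
    rw [fro_sq]; exact Finset.sum_comm
  have hM : ‖M‖ ^ 2 = ∑ j, ∑ k, (M k j) ^ 2 := by
    rw [fro_sq]; exact Finset.sum_comm
  have hsq : ‖A * M‖ ^ 2 ≤ (specNorm A * ‖M‖) ^ 2 := by
    rw [hAM, mul_pow, hM, Finset.mul_sum]
    refine Finset.sum_le_sum fun j _ => ?_
    have h1 : ∑ i, ((A * M) i j) ^ 2 ≤ specNorm A ^ 2 * ∑ k, (M k j) ^ 2 := by
      simp_rw [mul_entry]
      rw [col_norm, vec_norm]
      have := euclid_upper A ((WithLp.equiv 2 (Fin b → ℝ)).symm (fun k => M k j))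
      nlinarith [norm_nonneg (Matrix.toEuclideanLin A ((WithLp.equiv 2 (Fin b → ℝ)).symm (fun k => M k j))),
        norm_nonneg ((WithLp.equiv 2 (Fin b → ℝ)).symm (fun k => M k j))]
    exact h1
  exact (abs_le_of_sq_le_sq' hsq (by positivity)).2

lemma mul_norm_ge (A : Matrix (Fin a) (Fin b) ℝ) (M : Matrix (Fin b) (Fin c) ℝ)
    (hA : 0 ≤ sigmaMin A) : sigmaMin A * ‖M‖ ≤ ‖A * M‖ := by
  have hAM : ‖A * M‖ ^ 2 = ∑ j, ∑ i, ((A * M) i j) ^ 2 := by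
    rw [fro_sq]; exact Finset.sum_comm
  have hM : ‖M‖ ^ 2 = ∑ j, ∑ k, (M k j) ^ 2 := by
    rw [fro_sq]; exact Finset.sum_comm
  have hsq : (sigmaMin A * ‖M‖) ^ 2 ≤ ‖A * M‖ ^ 2 := by
    rw [hAM, mul_pow, hM, Finset.mul_sum]
    refine Finset.sum_le_sum fun j _ => ?_
    have h1 : sigmaMin A ^ 2 * ∑ k, (M k j) ^ 2 ≤ ∑ i, ((A * M) i j) ^ 2 := by
      simp_rw [mul_entry]
      rw [col_norm, vec_norm]
      have h5 := euclid_lower A ((WithLp.equiv 2 (Fin b → ℝ)).symm (fun k => M k j))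
      have h6 := pow_le_pow_left₀ (mul_nonneg hA (norm_nonneg _)) h5 2
      rw [mul_pow] at h6
      exact h6
    exact h1
  exact (abs_le_of_sq_le_sq' hsq (norm_nonneg _)).2

end Stmt4Aux

open Stmt4Aux

set_option maxHeartbeats 2000000 in
/-- Lemma 2 of the paper, first part: if `σ_min(X) > 0`, `δ > 0` and
`β > (‖∇f(X)‖₂‖X‖₂ + δ)/σ_min(X)²`, then with `Λ = Ψ(∇f(X)ᵀX)` one has
`‖XᵀX − I_p‖_F ≤ (‖X‖₂/δ)·‖∇_X L_β(X,Λ)‖_F`, where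
`∇_X L_β(X,Λ) = ∇f(X) − XΛ + βX(XᵀX − I_p)`. -/
theorem stmt4 {n p : ℕ} (f : Matrix (Fin n) (Fin p) ℝ → ℝ)
    (hf : ContDiff ℝ 1 f)
    (X G : Matrix (Fin n) (Fin p) ℝ)
    (hG : ∀ H, fderiv ℝ f X H = Matrix.trace (Gᵀ * H))
    (δ β : ℝ) (hδ : 0 < δ)
    (hσ : 0 < sigmaMin X)
    (hβ : β > (specNorm G * specNorm X + δ) / (sigmaMin X) ^ 2) :
    ‖Xᵀ * X - 1‖ ≤ (specNorm X / δ) *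
      ‖G - X * ((1 / 2 : ℝ) • (Gᵀ * X + (Gᵀ * X)ᵀ)) + β • (X * (Xᵀ * X - 1))‖ := by
  classical
  set E : Matrix (Fin p) (Fin p) ℝ := Xᵀ * X - 1 with hE
  set Λ : Matrix (Fin p) (Fin p) ℝ := (1 / 2 : ℝ) • (Gᵀ * X + (Gᵀ * X)ᵀ) with hΛ
  set R : Matrix (Fin n) (Fin p) ℝ := G - X * Λ + β • (X * E) with hR
  have hs : 0 ≤ specNorm X := by
    unfold specNorm; exact Real.iSup_nonneg fun v => norm_nonneg _
  have hg : 0 ≤ specNorm G := by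
    unfold specNorm; exact Real.iSup_nonneg fun v => norm_nonneg _
  have hσ0 : 0 ≤ sigmaMin X := le_of_lt hσ
  have hEs : Eᵀ = E := by
    rw [hE]; simp [Matrix.transpose_sub, Matrix.transpose_mul]
  -- key trace identity
  have tsym : ∀ (P : Matrix (Fin p) (Fin p) ℝ), Pᵀ = P →
      Matrix.trace (P * (Gᵀ * X)) = Matrix.trace (P * (Xᵀ * G)) := by
    intro P hP
    calc Matrix.trace (P * (Gᵀ * X)) = Matrix.trace ((P * (Gᵀ * X))ᵀ) :=
          (Matrix.trace_transpose _).symm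
      _ = Matrix.trace ((Gᵀ * X)ᵀ * Pᵀ) := by rw [Matrix.transpose_mul]
      _ = Matrix.trace ((Xᵀ * G) * P) := by
          rw [Matrix.transpose_mul, Matrix.transpose_transpose, hP]
      _ = Matrix.trace (P * (Xᵀ * G)) := Matrix.trace_mul_comm _ _
  have hXXE : Xᵀ * X = E + 1 := by rw [hE]; abel
  have key : ip (X * E) R + ip (X * E) (G * E) = β * ip (X * E) (X * E) := by
    have hXEt : (X * E)ᵀ = E * Xᵀ := by rw [Matrix.transpose_mul, hEs]
    rw [ip, ip, ip, hXEt]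
    have expand : E * Xᵀ * R = E * Xᵀ * G - E * Xᵀ * (X * Λ) + β • (E * Xᵀ * (X * E)) := by
      rw [hR]; simp only [Matrix.mul_add, Matrix.mul_sub, Matrix.mul_smul]
    rw [expand, Matrix.trace_add, Matrix.trace_sub, Matrix.trace_smul, smul_eq_mul]
    have hassoc1 : E * Xᵀ * (X * E) = E * Xᵀ * X * E := by rw [Matrix.mul_assoc (E * Xᵀ)]
    have h2 : Matrix.trace (E * Xᵀ * (X * Λ)) =
        Matrix.trace (E * E * (Xᵀ * G)) + Matrix.trace (E * (Xᵀ * G)) := by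
      have hEEs : (E * E)ᵀ = E * E := by rw [Matrix.transpose_mul, hEs]
      have : E * Xᵀ * (X * Λ) = (E * E + E) * Λ := by
        rw [← Matrix.mul_assoc, Matrix.mul_assoc E Xᵀ X, hXXE, Matrix.mul_add,
          Matrix.mul_one]
      rw [this, Matrix.add_mul, Matrix.trace_add]
      congr 1
      · -- trace (E*E*Λ) = trace (E*E*(Xᵀ*G))
        rw [hΛ, Matrix.mul_smul, Matrix.trace_smul, Matrix.mul_add, Matrix.trace_add,
          Matrix.transpose_mul, Matrix.transpose_transpose, tsym (E * E) hEEs, smul_eq_mul]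
        ring
      · rw [hΛ, Matrix.mul_smul, Matrix.trace_smul, Matrix.mul_add, Matrix.trace_add,
          Matrix.transpose_mul, Matrix.transpose_transpose, tsym E hEs, smul_eq_mul]
        ring
    have h3 : Matrix.trace (E * Xᵀ * (G * E)) = Matrix.trace (E * E * (Xᵀ * G)) := by
      calc Matrix.trace (E * Xᵀ * (G * E)) = Matrix.trace ((E * (Xᵀ * G)) * E) := by
            rw [Matrix.mul_assoc E Xᵀ (G * E), ← Matrix.mul_assoc Xᵀ G E,
              ← Matrix.mul_assoc E (Xᵀ * G) E]
        _ = Matrix.trace (E * (E * (Xᵀ * G))) := Matrix.trace_mul_comm _ _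
        _ = Matrix.trace (E * E * (Xᵀ * G)) := by rw [Matrix.mul_assoc]
    rw [h2, h3, hassoc1, Matrix.mul_assoc E Xᵀ G]
    ring
  -- norm bounds
  have hXE_le : ‖X * E‖ ≤ specNorm X * ‖E‖ := mul_norm_le X E hs
  have hGE_le : ‖G * E‖ ≤ specNorm G * ‖E‖ := mul_norm_le G E hg
  have hXE_ge : sigmaMin X * ‖E‖ ≤ ‖X * E‖ := mul_norm_ge X E hσ0
  have c1 : ip (X * E) R ≤ (specNorm X * ‖E‖) * ‖R‖ := by
    calc ip (X * E) R ≤ ‖X * E‖ * ‖R‖ := ip_le _ _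
      _ ≤ (specNorm X * ‖E‖) * ‖R‖ :=
        mul_le_mul_of_nonneg_right hXE_le (norm_nonneg _)
  have c2 : ip (X * E) (G * E) ≤ (specNorm X * ‖E‖) * (specNorm G * ‖E‖) := by
    calc ip (X * E) (G * E) ≤ ‖X * E‖ * ‖G * E‖ := ip_le _ _
      _ ≤ (specNorm X * ‖E‖) * (specNorm G * ‖E‖) :=
        mul_le_mul hXE_le hGE_le (norm_nonneg _) (by positivity)
  have hβpos : 0 < β := lt_trans (by positivity) hβ
  have hβσ : specNorm G * specNorm X + δ < β * sigmaMin X ^ 2 := by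
    have hβ' : (specNorm G * specNorm X + δ) / sigmaMin X ^ 2 < β := hβ
    rw [div_lt_iff₀ (by positivity)] at hβ'
    linarith
  have c3 : β * (sigmaMin X * ‖E‖) ^ 2 ≤ β * ip (X * E) (X * E) := by
    rw [ip_self]
    have := pow_le_pow_left₀ (by positivity) hXE_ge 2
    nlinarith
  have hkey2 : δ * ‖E‖ ^ 2 ≤ specNorm X * ‖E‖ * ‖R‖ := by
    nlinarith [norm_nonneg E, norm_nonneg R, sq_nonneg (‖E‖)]
  rcases eq_or_lt_of_le (norm_nonneg E) with h0 | h0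
  · rw [← h0]
    positivity
  · have hER : δ * ‖E‖ ≤ specNorm X * ‖R‖ := by
      have h4 : (δ * ‖E‖) * ‖E‖ ≤ (specNorm X * ‖R‖) * ‖E‖ := by nlinarith
      exact le_of_mul_le_mul_right h4 h0
    have : specNorm X / δ * ‖R‖ = (specNorm X * ‖R‖) / δ := by ring
    rw [this, le_div_iff₀ hδ]
    linarith
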